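/- Assume the no-tie condition (for all θ and all p ∈ 𝒫, D_θ({(r,a) : r = ⟨p,a⟩}) = 0) and P_max > R_max/b_min. Define the envelope objective f(p) := ⟨p, b⟩ + max_θ g_θ(p) and let 𝒫⋆ := argmin_{p ∈ 𝒫} f(p). Then the set of saddle points of L(w,p) := ⟨p,b⟩ + ∑_θ w_θ g_θ(p) over Δ_K × 𝒫 is exactly {(w, p) ∈ Δ_K × 𝒫 : p ∈ 𝒫⋆, supp(w) ⊆ argmax_θ g_θ(p), H(w, p) ≤ b componentwise, and ⟨p, b − H(w, p)⟩ = 0}. -/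

import Mathlib

open MeasureTheory Filter

/-- Surplus function `g_θ(p) = E_{(r,a)∼D}[(r − ⟨p,a⟩)₊]`. -/
noncomputable def surplus {d : ℕ} (D : Measure (ℝ × (Fin d → ℝ))) (p : Fin d → ℝ) : ℝ :=
  ∫ z, max (z.1 - ∑ i, p i * z.2 i) 0 ∂D

/-- Threshold consumption `h_θ(p) = E_{(r,a)∼D}[a · 1{r > ⟨p,a⟩}]`. -/
noncomputable def consumption {d : ℕ} (D : Measure (ℝ × (Fin d → ℝ))) (p : Fin d → ℝ) :
    Fin d → ℝ :=
  fun i => ∫ z, (if (∑ j, p j * z.2 j) < z.1 then z.2 i else 0) ∂D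

section Aux
variable {d : ℕ}

lemma meas1 (p : Fin d → ℝ) :
    Measurable fun z : ℝ × (Fin d → ℝ) => max (z.1 - ∑ i, p i * z.2 i) 0 := by
  measurability

lemma meas2 (p : Fin d → ℝ) (i : Fin d) :
    Measurable fun z : ℝ × (Fin d → ℝ) =>
      if (∑ j, p j * z.2 j) < z.1 then z.2 i else 0 := by
  have hs : MeasurableSet {z : ℝ × (Fin d → ℝ) | (∑ j, p j * z.2 j) < z.1} := by
    apply measurableSet_lt
    · measurability
    · exact measurable_fst
  exact Measurable.ite hs (by measurability) measurable_const

lemma sum_shift (p : Fin d → ℝ) (i : Fin d) (ε : ℝ) (a : Fin d → ℝ) :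
    ∑ j, (p j + if j = i then ε else 0) * a j = (∑ j, p j * a j) + ε * a i := by
  have h : ∀ j : Fin d, (p j + if j = i then ε else 0) * a j
      = p j * a j + (if j = i then ε * a j else 0) := by
    intro j; split <;> ring
  rw [Finset.sum_congr rfl fun j _ => h j, Finset.sum_add_distrib,
    Finset.sum_ite_eq' Finset.univ i (fun j => ε * a j)]
  simp

variable {Rmax Amax : ℝ}
variable (D : Measure (ℝ × (Fin d → ℝ))) [IsProbabilityMeasure D]

lemma int1 (hDs : ∀ᵐ z ∂ D, 0 ≤ z.1 ∧ z.1 ≤ Rmax ∧ ∀ i, 0 ≤ z.2 i ∧ z.2 i ≤ Amax)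
    (p : Fin d → ℝ) (hp : ∀ i, 0 ≤ p i) :
    Integrable (fun z : ℝ × (Fin d → ℝ) => max (z.1 - ∑ i, p i * z.2 i) 0) D := by
  refine (integrable_const Rmax).mono' (meas1 p).aestronglyMeasurable ?_
  filter_upwards [hDs] with z hz
  have ht : 0 ≤ ∑ i, p i * z.2 i :=
    Finset.sum_nonneg fun i _ => mul_nonneg (hp i) (hz.2.2 i).1
  have h1 : z.1 - ∑ i, p i * z.2 i ≤ Rmax := by linarith [hz.2.1]
  have h0 : (0:ℝ) ≤ max (z.1 - ∑ i, p i * z.2 i) 0 := le_max_right _ _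
  rw [Real.norm_eq_abs, abs_of_nonneg h0]
  exact max_le h1 (by linarith [hz.1, hz.2.1])

lemma int2 (hDs : ∀ᵐ z ∂ D, 0 ≤ z.1 ∧ z.1 ≤ Rmax ∧ ∀ i, 0 ≤ z.2 i ∧ z.2 i ≤ Amax)
    (p : Fin d → ℝ) (i : Fin d) :
    Integrable (fun z : ℝ × (Fin d → ℝ) =>
      if (∑ j, p j * z.2 j) < z.1 then z.2 i else 0) D := by
  refine (integrable_const Amax).mono' (meas2 p i).aestronglyMeasurable ?_
  filter_upwards [hDs] with z hz
  have h1 := (hz.2.2 i).1; have h2 := (hz.2.2 i).2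
  rw [Real.norm_eq_abs]
  split <;> rw [abs_of_nonneg (by linarith)] <;> linarith

omit [IsProbabilityMeasure D] in
lemma surplus_nonneg (p : Fin d → ℝ) : 0 ≤ surplus D p :=
  integral_nonneg fun z => le_max_right _ _

lemma surplus_le (hDs : ∀ᵐ z ∂ D, 0 ≤ z.1 ∧ z.1 ≤ Rmax ∧ ∀ i, 0 ≤ z.2 i ∧ z.2 i ≤ Amax)
    (p : Fin d → ℝ) (hp : ∀ i, 0 ≤ p i) : surplus D p ≤ Rmax := by
  have h : surplus D p ≤ ∫ _z, Rmax ∂D := by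
    refine integral_mono_ae (int1 D hDs p hp) (integrable_const _) ?_
    filter_upwards [hDs] with z hz
    have ht : 0 ≤ ∑ i, p i * z.2 i :=
      Finset.sum_nonneg fun i _ => mul_nonneg (hp i) (hz.2.2 i).1
    exact max_le (by linarith [hz.2.1]) (by linarith [hz.1, hz.2.1])
  simpa using h

lemma subgrad (hDs : ∀ᵐ z ∂ D, 0 ≤ z.1 ∧ z.1 ≤ Rmax ∧ ∀ i, 0 ≤ z.2 i ∧ z.2 i ≤ Amax)
    (p q : Fin d → ℝ) (hp : ∀ i, 0 ≤ p i) (hq : ∀ i, 0 ≤ q i) :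
    surplus D p + ∑ i, (p i - q i) * consumption D p i ≤ surplus D q := by
  have key : ∀ z : ℝ × (Fin d → ℝ),
      max (z.1 - ∑ i, p i * z.2 i) 0
        + ∑ i, (p i - q i) * (if (∑ j, p j * z.2 j) < z.1 then z.2 i else 0)
      ≤ max (z.1 - ∑ i, q i * z.2 i) 0 := by
    intro z
    by_cases hlt : (∑ j, p j * z.2 j) < z.1
    · simp only [if_pos hlt]
      have h1 : max (z.1 - ∑ i, p i * z.2 i) 0 = z.1 - ∑ i, p i * z.2 i :=
        max_eq_left (by linarith)
      have h2 : ∑ i, (p i - q i) * z.2 i = (∑ i, p i * z.2 i) - ∑ i, q i * z.2 i := by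
        rw [← Finset.sum_sub_distrib]; congr 1; ext i; ring
      rw [h1, h2]
      have h3 := le_max_left (z.1 - ∑ i, q i * z.2 i) (0:ℝ)
      linarith
    · simp only [if_neg hlt, mul_zero, Finset.sum_const_zero, add_zero]
      have h1 : max (z.1 - ∑ i, p i * z.2 i) 0 = 0 := max_eq_right (by push_neg at hlt; linarith)
      rw [h1]; exact le_max_right _ _
  have hint2 : ∀ i : Fin d, Integrable (fun z : ℝ × (Fin d → ℝ) =>
      (p i - q i) * (if (∑ j, p j * z.2 j) < z.1 then z.2 i else 0)) D :=
    fun i => (int2 D hDs p i).const_mul _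
  have hsum : Integrable (fun z : ℝ × (Fin d → ℝ) =>
      ∑ i, (p i - q i) * (if (∑ j, p j * z.2 j) < z.1 then z.2 i else 0)) D :=
    integrable_finset_sum _ fun i _ => hint2 i
  have heq : surplus D p + ∑ i, (p i - q i) * consumption D p i
      = ∫ z, (max (z.1 - ∑ i, p i * z.2 i) 0
          + ∑ i, (p i - q i) * (if (∑ j, p j * z.2 j) < z.1 then z.2 i else 0)) ∂D := by
    rw [integral_add (int1 D hDs p hp) hsum, integral_finset_sum _ fun i _ => hint2 i]
    congr 1
    refine Finset.sum_congr rfl fun i _ => ?_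
    rw [MeasureTheory.integral_const_mul]; rfl
  rw [heq]
  exact integral_mono_ae ((int1 D hDs p hp).add hsum)
    (int1 D hDs q hq) (Filter.Eventually.of_forall key)

lemma conv_pt_right {t r a : ℝ} (ha : 0 ≤ a) {ε : ℕ → ℝ} (hε0 : ∀ n, 0 < ε n)
    (hεlim : Tendsto ε atTop (nhds 0)) :
    Tendsto (fun n => if t + ε n * a < r then a else 0) atTop
      (nhds (if t < r then a else 0)) := by
  by_cases h : t < r
  · rw [if_pos h]
    rcases eq_or_lt_of_le ha with ha0 | ha0
    · simp [← ha0]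
    · have hev : ∀ᶠ n in atTop, ε n * a < r - t := by
        have h2 : Tendsto (fun n => ε n * a) atTop (nhds 0) := by
          simpa using hεlim.mul_const a
        exact h2.eventually_lt_const (by linarith)
      refine Tendsto.congr' ?_ tendsto_const_nhds
      filter_upwards [hev] with n hn
      rw [if_pos (by linarith)]
  · rw [if_neg h]
    push_neg at h
    have h2 : ∀ n, ¬ (t + ε n * a < r) := fun n => by
      have := mul_nonneg (hε0 n).le ha; linarith
    simp only [h2, if_false]
    exact tendsto_const_nhds

lemma conv_pt_left {t r a : ℝ} (ha : 0 ≤ a) (hne : r ≠ t) {ε : ℕ → ℝ} (hε0 : ∀ n, 0 < ε n)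
    (hεlim : Tendsto ε atTop (nhds 0)) :
    Tendsto (fun n => if t - ε n * a < r then a else 0) atTop
      (nhds (if t < r then a else 0)) := by
  by_cases h : t < r
  · rw [if_pos h]
    have h2 : ∀ n, (if t - ε n * a < r then a else 0) = a := fun n => by
      have := mul_nonneg (hε0 n).le ha
      rw [if_pos (by linarith)]
    simp only [h2]; exact tendsto_const_nhds
  · rw [if_neg h]
    push_neg at h
    have hrt : r < t := lt_of_le_of_ne h hne
    have hev : ∀ᶠ n in atTop, ε n * a < t - r := by
      have h2 : Tendsto (fun n => ε n * a) atTop (nhds 0) := by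
        simpa using hεlim.mul_const a
      exact h2.eventually_lt_const (by linarith)
    refine Tendsto.congr' ?_ tendsto_const_nhds
    filter_upwards [hev] with n hn
    rw [if_neg (by push_neg; linarith)]

lemma consumption_tendsto
    (hDs : ∀ᵐ z ∂ D, 0 ≤ z.1 ∧ z.1 ≤ Rmax ∧ ∀ i, 0 ≤ z.2 i ∧ z.2 i ≤ Amax)
    (p : Fin d → ℝ) (i : Fin d) (q : ℕ → Fin d → ℝ)
    (hconv : ∀ᵐ z ∂ D, Tendsto
      (fun n => if (∑ j, q n j * z.2 j) < z.1 then z.2 i else 0) atTop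
      (nhds (if (∑ j, p j * z.2 j) < z.1 then z.2 i else 0))) :
    Tendsto (fun n => consumption D (q n) i) atTop (nhds (consumption D p i)) := by
  refine tendsto_integral_of_dominated_convergence (fun _ => Amax)
    (fun n => (meas2 (q n) i).aestronglyMeasurable) (integrable_const _) ?_ hconv
  intro n
  filter_upwards [hDs] with z hz
  have h1 := (hz.2.2 i).1; have h2 := (hz.2.2 i).2
  rw [Real.norm_eq_abs]
  split <;> rw [abs_of_nonneg (by linarith)] <;> linarith

end Aux

lemma keystep {K d : ℕ} {Rmax Amax : ℝ}
    (D : Fin K → Measure (ℝ × (Fin d → ℝ))) (hDp : ∀ θ, IsProbabilityMeasure (D θ))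
    (hDs : ∀ θ, ∀ᵐ z ∂ D θ, 0 ≤ z.1 ∧ z.1 ≤ Rmax ∧ ∀ i, 0 ≤ z.2 i ∧ z.2 i ≤ Amax)
    (b : Fin d → ℝ) (w : Fin K → ℝ) (hw0 : ∀ θ, 0 ≤ w θ)
    (p q : Fin d → ℝ) (hp0 : ∀ i, 0 ≤ p i) (hq0 : ∀ i, 0 ≤ q i)
    (i : Fin d) (ε : ℝ) (hεq : ∀ j, q j = p j + if j = i then ε else 0)
    (hmin : (∑ j, p j * b j) + ∑ θ, w θ * surplus (D θ) p
          ≤ (∑ j, q j * b j) + ∑ θ, w θ * surplus (D θ) q) :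
    ε * (∑ θ, w θ * consumption (D θ) q i) ≤ ε * b i := by
  have hsubθ : ∀ θ, surplus (D θ) q ≤ surplus (D θ) p - ε * consumption (D θ) q i := by
    intro θ
    haveI := hDp θ
    have h := subgrad (D θ) (hDs θ) q p hq0 hp0
    have hsum : ∑ j, (q j - p j) * consumption (D θ) q j
        = ε * consumption (D θ) q i := by
      have h2 : ∀ j, (q j - p j) * consumption (D θ) q j
          = (if j = i then ε * consumption (D θ) q j else 0) := fun j => by
        rw [hεq j]; split <;> ring
      rw [Finset.sum_congr rfl fun j _ => h2 j,
        Finset.sum_ite_eq' Finset.univ i (fun j => ε * consumption (D θ) q j)]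
      simp
    rw [hsum] at h; linarith
  have hqb : ∑ j, q j * b j = (∑ j, p j * b j) + ε * b i := by
    rw [Finset.sum_congr rfl fun j _ => by rw [hεq j], sum_shift]
  have hws : ∑ θ, w θ * surplus (D θ) q
      ≤ (∑ θ, w θ * surplus (D θ) p) - ε * ∑ θ, w θ * consumption (D θ) q i := by
    calc ∑ θ, w θ * surplus (D θ) q
        ≤ ∑ θ, (w θ * surplus (D θ) p - ε * (w θ * consumption (D θ) q i)) := by
          refine Finset.sum_le_sum fun θ _ => ?_
          calc w θ * surplus (D θ) q
              ≤ w θ * (surplus (D θ) p - ε * consumption (D θ) q i) :=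
                mul_le_mul_of_nonneg_left (hsubθ θ) (hw0 θ)
            _ = w θ * surplus (D θ) p - ε * (w θ * consumption (D θ) q i) := by ring
      _ = _ := by rw [Finset.sum_sub_distrib, ← Finset.mul_sum]
  linarith

/-- characterization of all saddle points.  Under the no-tie condition and
`P_max > R_max / b_min`, with `f(p) = ⟨p,b⟩ + max_θ g_θ(p)` and `𝒫⋆ = argmin_{𝒫} f`, the
set of saddle points of `L(w,p) = ⟨p,b⟩ + ∑_θ w_θ g_θ(p)` on `Δ_K × 𝒫` is exactly
`{(w,p) : p ∈ 𝒫⋆, supp(w) ⊆ argmax_θ g_θ(p), H(w,p) ≤ b, ⟨p, b − H(w,p)⟩ = 0}`. -/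
theorem stmt2 (K d : ℕ) (hK : 1 ≤ K) (hd : 1 ≤ d)
    (Rmax Amax : ℝ) (hR : 0 < Rmax) (hA : 0 < Amax)
    (D : Fin K → Measure (ℝ × (Fin d → ℝ)))
    (hDp : ∀ θ, IsProbabilityMeasure (D θ))
    (hDs : ∀ θ, ∀ᵐ z ∂ D θ, 0 ≤ z.1 ∧ z.1 ≤ Rmax ∧ ∀ i, 0 ≤ z.2 i ∧ z.2 i ≤ Amax)
    (b : Fin d → ℝ) (hb : ∀ i, 0 < b i)
    (bmin : ℝ) (hbmin : IsLeast (Set.range b) bmin)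
    (Pmax : ℝ) (hP : Rmax / bmin < Pmax)
    (hnotie : ∀ θ, ∀ p : Fin d → ℝ, (∀ i, p i ∈ Set.Icc 0 Pmax) →
      D θ {z | z.1 = ∑ i, p i * z.2 i} = 0)
    (L : (Fin K → ℝ) → (Fin d → ℝ) → ℝ)
    (hL : ∀ w p, L w p = (∑ i, p i * b i) + ∑ θ, w θ * surplus (D θ) p)
    (H : (Fin K → ℝ) → (Fin d → ℝ) → Fin d → ℝ)
    (hH : ∀ w p i, H w p i = ∑ θ, w θ * consumption (D θ) p i)
    (f : (Fin d → ℝ) → ℝ)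
    (hf : ∀ p, f p = (∑ i, p i * b i) + sSup (Set.range fun θ => surplus (D θ) p)) :
    {wp : (Fin K → ℝ) × (Fin d → ℝ) |
        ((∀ θ, 0 ≤ wp.1 θ) ∧ ∑ θ, wp.1 θ = 1) ∧ (∀ i, wp.2 i ∈ Set.Icc 0 Pmax) ∧
        (∀ w : Fin K → ℝ, (∀ θ, 0 ≤ w θ) ∧ ∑ θ, w θ = 1 → L w wp.2 ≤ L wp.1 wp.2) ∧
        (∀ p : Fin d → ℝ, (∀ i, p i ∈ Set.Icc 0 Pmax) → L wp.1 wp.2 ≤ L wp.1 p)}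
      =
    {wp : (Fin K → ℝ) × (Fin d → ℝ) |
        ((∀ θ, 0 ≤ wp.1 θ) ∧ ∑ θ, wp.1 θ = 1) ∧ (∀ i, wp.2 i ∈ Set.Icc 0 Pmax) ∧
        (∀ q : Fin d → ℝ, (∀ i, q i ∈ Set.Icc 0 Pmax) → f wp.2 ≤ f q) ∧
        (∀ θ, 0 < wp.1 θ → ∀ θ', surplus (D θ') wp.2 ≤ surplus (D θ) wp.2) ∧
        (∀ i, H wp.1 wp.2 i ≤ b i) ∧
        (∑ i, wp.2 i * (b i - H wp.1 wp.2 i)) = 0} := by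
  haveI : ∀ θ, IsProbabilityMeasure (D θ) := hDp
  haveI : Nonempty (Fin K) := Fin.pos_iff_nonempty.mp hK
  obtain ⟨⟨j0, hj0⟩, hlb⟩ := hbmin
  have hbminpos : 0 < bmin := hj0 ▸ hb j0
  have hble : ∀ i, bmin ≤ b i := fun i => hlb ⟨i, rfl⟩
  have hPpos : 0 ≤ Pmax := le_of_lt (lt_of_le_of_lt (by positivity) hP)
  ext ⟨w, p⟩
  simp only [Set.mem_setOf_eq]
  constructor
  · rintro ⟨⟨hw0, hw1⟩, hpbox, hwmax, hpmin⟩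
    have hp0 : ∀ i, 0 ≤ p i := fun i => (hpbox i).1
    -- bound: p i < Pmax
    have hplt : ∀ i, p i < Pmax := by
      intro i
      have hL0 : L w (fun _ => 0) ≤ Rmax := by
        rw [hL]
        have h1 : ∑ θ, w θ * surplus (D θ) (fun _ => 0) ≤ ∑ θ, w θ * Rmax :=
          Finset.sum_le_sum fun θ _ => mul_le_mul_of_nonneg_left
            (surplus_le (D θ) (hDs θ) _ (fun _ => le_refl 0)) (hw0 θ)
        have h2 : ∑ θ, w θ * Rmax = Rmax := by rw [← Finset.sum_mul, hw1, one_mul]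
        simp only [zero_mul, Finset.sum_const_zero, zero_add]
        linarith
      have hlb2 : p i * b i ≤ L w p := by
        rw [hL]
        have h1 : p i * b i ≤ ∑ j, p j * b j :=
          Finset.single_le_sum (fun j _ => mul_nonneg (hp0 j) (hb j).le) (Finset.mem_univ i)
        have h2 : 0 ≤ ∑ θ, w θ * surplus (D θ) p :=
          Finset.sum_nonneg fun θ _ => mul_nonneg (hw0 θ) (surplus_nonneg (D θ) p)
        linarith
      have hmin0 := hpmin (fun _ => 0) (fun _ => ⟨le_refl 0, hPpos⟩)
      have hpb : p i * b i ≤ Rmax := by linarith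
      have h3 : p i ≤ Rmax / b i := (le_div_iff₀ (hb i)).mpr hpb
      have h4 : Rmax / b i ≤ Rmax / bmin :=
        div_le_div_of_nonneg_left hR.le hbminpos (hble i)
      linarith
    -- H ≤ b
    have HleB : ∀ i, H w p i ≤ b i := by
      intro i
      set δ := Pmax - p i with hδdef
      have hδ : 0 < δ := by simp only [hδdef]; linarith [hplt i]
      have hε0 : ∀ n : ℕ, 0 < δ / (n + 1) := fun n => by positivity
      have hεδ : ∀ n : ℕ, δ / (n + 1) ≤ δ := fun n =>
        div_le_self hδ.le (by push_cast; linarith [Nat.cast_nonneg (α := ℝ) n])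
      have hεlim : Tendsto (fun n : ℕ => δ / (n + 1)) atTop (nhds 0) := by
        simpa [div_eq_mul_inv] using tendsto_one_div_add_atTop_nhds_zero_nat.const_mul δ
      set q : ℕ → Fin d → ℝ := fun n j => p j + if j = i then δ / (n + 1) else 0 with hqdef
      have hq0 : ∀ n j, 0 ≤ q n j := by
        intro n j; simp only [hqdef]
        split
        · linarith [hp0 j, (hε0 n).le]
        · simpa using hp0 j
      have hqbox : ∀ n j, q n j ∈ Set.Icc 0 Pmax := by
        intro n j
        refine ⟨hq0 n j, ?_⟩
        simp only [hqdef]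
        split
        · rename_i hji; subst hji; linarith [hεδ n]
        · simpa using (hpbox j).2
      have hstep : ∀ n : ℕ, H w (q n) i ≤ b i := by
        intro n
        have hks := keystep D hDp hDs b w hw0 p (q n) hp0 (hq0 n) i (δ / (n + 1))
          (fun j => rfl) (by have := hpmin (q n) (hqbox n); rw [hL, hL] at this; exact this)
        rw [hH]
        exact le_of_mul_le_mul_left (by linarith [hks]) (hε0 n)
      have htend : Tendsto (fun n => H w (q n) i) atTop (nhds (H w p i)) := by
        simp only [hH]
        refine tendsto_finset_sum _ fun θ _ => Tendsto.const_mul _ ?_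
        refine consumption_tendsto (D θ) (hDs θ) p i (q ·) ?_
        filter_upwards [hDs θ] with z hz
        have hrw : ∀ n, ∑ j, q n j * z.2 j = (∑ j, p j * z.2 j) + (δ / (n + 1)) * z.2 i :=
          fun n => sum_shift p i (δ / (n + 1)) z.2
        simp only [hrw]
        exact conv_pt_right (hz.2.2 i).1 hε0 hεlim
      exact le_of_tendsto htend (Filter.Eventually.of_forall hstep)
    -- b ≤ H on support of p
    have HgeB : ∀ i, 0 < p i → b i ≤ H w p i := by
      intro i hpi
      have hε0 : ∀ n : ℕ, 0 < p i / (n + 1) := fun n => by positivity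
      have hεδ : ∀ n : ℕ, p i / (n + 1) ≤ p i := fun n =>
        div_le_self hpi.le (by push_cast; linarith [Nat.cast_nonneg (α := ℝ) n])
      have hεlim : Tendsto (fun n : ℕ => p i / (n + 1)) atTop (nhds 0) := by
        simpa [div_eq_mul_inv] using tendsto_one_div_add_atTop_nhds_zero_nat.const_mul (p i)
      set q : ℕ → Fin d → ℝ := fun n j => p j + if j = i then -(p i / (n + 1)) else 0 with hqdef
      have hq0 : ∀ n j, 0 ≤ q n j := by
        intro n j; simp only [hqdef]
        split
        · rename_i hji; subst hji; linarith [hεδ n]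
        · simpa using hp0 j
      have hqbox : ∀ n j, q n j ∈ Set.Icc 0 Pmax := by
        intro n j
        refine ⟨hq0 n j, ?_⟩
        simp only [hqdef]
        split
        · rename_i hji; subst hji; linarith [(hε0 n).le, (hpbox j).2]
        · simpa using (hpbox j).2
      have hstep : ∀ n : ℕ, b i ≤ H w (q n) i := by
        intro n
        have hks := keystep D hDp hDs b w hw0 p (q n) hp0 (hq0 n) i (-(p i / (n + 1)))
          (fun j => rfl) (by have := hpmin (q n) (hqbox n); rw [hL, hL] at this; exact this)
        rw [hH]
        nlinarith [hks, hε0 n]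
      have htend : Tendsto (fun n => H w (q n) i) atTop (nhds (H w p i)) := by
        simp only [hH]
        refine tendsto_finset_sum _ fun θ _ => Tendsto.const_mul _ ?_
        refine consumption_tendsto (D θ) (hDs θ) p i (q ·) ?_
        have hne : ∀ᵐ z ∂ D θ, z.1 ≠ ∑ j, p j * z.2 j := by
          rw [ae_iff]
          simpa using hnotie θ p hpbox
        filter_upwards [hDs θ, hne] with z hz hzne
        have hrw : ∀ n, ∑ j, q n j * z.2 j
            = (∑ j, p j * z.2 j) - (p i / (n + 1)) * z.2 i := fun n => by
          rw [sum_shift p i (-(p i / (n + 1))) z.2]; ring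
        simp only [hrw]
        exact conv_pt_left (hz.2.2 i).1 hzne hε0 hεlim
      exact ge_of_tendsto htend (Filter.Eventually.of_forall hstep)
    -- max attained and sum equality
    obtain ⟨θ0, hθ0⟩ := Finite.exists_max (fun θ => surplus (D θ) p)
    have hδsimplex : (∀ θ, (0:ℝ) ≤ if θ = θ0 then 1 else 0) ∧
        (∑ θ, if θ = θ0 then (1:ℝ) else 0) = 1 := by
      constructor
      · intro θ; split <;> norm_num
      · rw [Finset.sum_ite_eq' Finset.univ θ0 (fun _ => (1:ℝ))]; simp
    have hdelta := hwmax _ hδsimplex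
    rw [hL, hL] at hdelta
    have hdsum : ∑ θ, (if θ = θ0 then (1:ℝ) else 0) * surplus (D θ) p
        = surplus (D θ0) p := by
      rw [Finset.sum_congr rfl fun θ _ => by
        show (if θ = θ0 then (1:ℝ) else 0) * surplus (D θ) p
            = if θ = θ0 then surplus (D θ) p else 0
        split <;> ring]
      rw [Finset.sum_ite_eq' Finset.univ θ0 (fun θ => surplus (D θ) p)]; simp
    have hge : surplus (D θ0) p ≤ ∑ θ, w θ * surplus (D θ) p := by
      rw [hdsum] at hdelta; linarith
    have hle : ∑ θ, w θ * surplus (D θ) p ≤ surplus (D θ0) p := by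
      calc ∑ θ, w θ * surplus (D θ) p ≤ ∑ θ, w θ * surplus (D θ0) p :=
            Finset.sum_le_sum fun θ _ => mul_le_mul_of_nonneg_left (hθ0 θ) (hw0 θ)
        _ = surplus (D θ0) p := by rw [← Finset.sum_mul, hw1, one_mul]
    have hsum_eq : ∑ θ, w θ * surplus (D θ) p = surplus (D θ0) p := le_antisymm hle hge
    -- support condition
    have hsupp : ∀ θ, 0 < w θ → ∀ θ', surplus (D θ') p ≤ surplus (D θ) p := by
      intro θ hθ θ'
      have hzero : ∑ τ, w τ * (surplus (D θ0) p - surplus (D τ) p) = 0 := by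
        rw [Finset.sum_congr rfl fun τ _ => by
          show w τ * (surplus (D θ0) p - surplus (D τ) p)
              = w τ * surplus (D θ0) p - w τ * surplus (D τ) p
          ring]
        rw [Finset.sum_sub_distrib, ← Finset.sum_mul, hw1, one_mul, hsum_eq, sub_self]
      have hterm := (Finset.sum_eq_zero_iff_of_nonneg
        (fun τ _ => mul_nonneg (hw0 τ) (by linarith [hθ0 τ]))).mp hzero θ (Finset.mem_univ θ)
      have heqθ : surplus (D θ) p = surplus (D θ0) p := by
        rcases mul_eq_zero.mp hterm with h | h
        · exact absurd h (ne_of_gt hθ)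
        · linarith
      rw [heqθ]; exact hθ0 θ'
    -- sSup = max
    have hsSup : sSup (Set.range fun θ => surplus (D θ) p) = surplus (D θ0) p := by
      apply le_antisymm
      · exact csSup_le (Set.range_nonempty _) (by rintro _ ⟨θ, rfl⟩; exact hθ0 θ)
      · exact le_csSup (Set.Finite.bddAbove (Set.finite_range _)) ⟨θ0, rfl⟩
    have hfL : f p = L w p := by rw [hf, hL, hsSup, hsum_eq]
    refine ⟨⟨hw0, hw1⟩, hpbox, ?_, hsupp, HleB, ?_⟩
    · intro q hqbox
      have h1 : L w p ≤ L w q := hpmin q hqbox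
      have h2 : L w q ≤ f q := by
        rw [hL, hf]
        have h3 : ∀ θ, surplus (D θ) q ≤ sSup (Set.range fun θ => surplus (D θ) q) :=
          fun θ => le_csSup (Set.Finite.bddAbove (Set.finite_range _)) ⟨θ, rfl⟩
        have h4 : ∑ θ, w θ * surplus (D θ) q
            ≤ sSup (Set.range fun θ => surplus (D θ) q) := by
          calc ∑ θ, w θ * surplus (D θ) q
              ≤ ∑ θ, w θ * sSup (Set.range fun θ => surplus (D θ) q) :=
                Finset.sum_le_sum fun θ _ => mul_le_mul_of_nonneg_left (h3 θ) (hw0 θ)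
            _ = _ := by rw [← Finset.sum_mul, hw1, one_mul]
        linarith
      linarith [hfL ▸ h1]
    · refine Finset.sum_eq_zero fun i _ => ?_
      rcases (hp0 i).eq_or_lt with h | h
      · rw [← h, zero_mul]
      · have h1 := HgeB i h
        have h2 := HleB i
        have : b i - H w p i = 0 := by linarith
        rw [this, mul_zero]
  · rintro ⟨⟨hw0, hw1⟩, hpbox, _, hsupp, hHb, hcs⟩
    have hp0 : ∀ i, 0 ≤ p i := fun i => (hpbox i).1
    obtain ⟨θ0, _, hθ0ne⟩ := Finset.exists_ne_zero_of_sum_ne_zero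
      (by rw [hw1]; exact one_ne_zero)
    have hθ0pos : 0 < w θ0 := (hw0 θ0).lt_of_ne (Ne.symm hθ0ne)
    have hmax := hsupp θ0 hθ0pos
    refine ⟨⟨hw0, hw1⟩, hpbox, ?_, ?_⟩
    · intro w' ⟨hw'0, hw'1⟩
      rw [hL, hL]
      have hww : ∑ θ, w θ * surplus (D θ) p = surplus (D θ0) p := by
        rw [Finset.sum_congr rfl fun θ _ => ?_, ← Finset.sum_mul, hw1, one_mul]
        rcases (hw0 θ).eq_or_lt with h | h
        · rw [← h, zero_mul, zero_mul]
        · have := le_antisymm (hmax θ) (hsupp θ h θ0)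
          rw [this]
      have hw' : ∑ θ, w' θ * surplus (D θ) p ≤ surplus (D θ0) p := by
        calc ∑ θ, w' θ * surplus (D θ) p ≤ ∑ θ, w' θ * surplus (D θ0) p :=
              Finset.sum_le_sum fun θ _ => mul_le_mul_of_nonneg_left (hmax θ) (hw'0 θ)
          _ = _ := by rw [← Finset.sum_mul, hw'1, one_mul]
      linarith [hww]
    · intro q hqbox
      rw [hL, hL]
      have hq0 : ∀ i, 0 ≤ q i := fun i => (hqbox i).1
      have hsubθ : ∀ θ, surplus (D θ) p + ∑ i, (p i - q i) * consumption (D θ) p i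
          ≤ surplus (D θ) q := fun θ => subgrad (D θ) (hDs θ) p q hp0 hq0
      have hswap : ∑ θ, w θ * (∑ i, (p i - q i) * consumption (D θ) p i)
          = ∑ i, (p i - q i) * H w p i := by
        calc ∑ θ, w θ * (∑ i, (p i - q i) * consumption (D θ) p i)
            = ∑ θ, ∑ i, w θ * ((p i - q i) * consumption (D θ) p i) := by
              simp_rw [Finset.mul_sum]
          _ = ∑ i, ∑ θ, w θ * ((p i - q i) * consumption (D θ) p i) := Finset.sum_comm
          _ = ∑ i, (p i - q i) * H w p i := by
              refine Finset.sum_congr rfl fun i _ => ?_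
              rw [hH, Finset.mul_sum]
              exact Finset.sum_congr rfl fun θ _ => by ring
      have hS : (∑ θ, w θ * surplus (D θ) p) + ∑ i, (p i - q i) * H w p i
          ≤ ∑ θ, w θ * surplus (D θ) q := by
        rw [← hswap]
        calc (∑ θ, w θ * surplus (D θ) p)
              + ∑ θ, w θ * (∑ i, (p i - q i) * consumption (D θ) p i)
            = ∑ θ, w θ * (surplus (D θ) p + ∑ i, (p i - q i) * consumption (D θ) p i) := by
              rw [← Finset.sum_add_distrib]
              exact Finset.sum_congr rfl fun θ _ => by ring
          _ ≤ ∑ θ, w θ * surplus (D θ) q :=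
              Finset.sum_le_sum fun θ _ => mul_le_mul_of_nonneg_left (hsubθ θ) (hw0 θ)
      have halg : (∑ i, q i * b i) - (∑ i, p i * b i) + ∑ i, (p i - q i) * H w p i
          = (∑ i, q i * (b i - H w p i)) - ∑ i, p i * (b i - H w p i) := by
        rw [← Finset.sum_sub_distrib, ← Finset.sum_add_distrib, ← Finset.sum_sub_distrib]
        exact Finset.sum_congr rfl fun i _ => by ring
      have hfin : 0 ≤ ∑ i, q i * (b i - H w p i) :=
        Finset.sum_nonneg fun i _ => mul_nonneg (hq0 i) (by linarith [hHb i])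
      rw [hcs] at halg
      linarith [hS, halg, hfin]
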